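/- Let (r_n) be regularly varying with index ρ > 0 and define r^inv_n = min{i ≥ 1 : r_i ≥ n}. Then (r^inv_n) is regularly varying with index 1/ρ, and r^inv_{⌊r_n⌋} ~ n and r_{⌊r^inv_n⌋} ~ n as n → ∞. -/

import Mathlib

/-- A sequence `(r_n)_{n ≥ 1}` of positive reals is regularly varying with index `ρ`
if `r n = n^ρ * ℓ n` with `ℓ` slowly varying: `ℓ ⌊λn⌋ / ℓ n → 1` for all `λ > 0`. -/
def RVSeq (r : ℕ → ℝ) (ρ : ℝ) : Prop :=
  (∀ n, 1 ≤ n → 0 < r n) ∧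
  ∃ l : ℕ → ℝ, (∀ n, 1 ≤ n → r n = (n : ℝ) ^ ρ * l n) ∧
    ∀ lam : ℝ, 0 < lam →
      Filter.Tendsto (fun n : ℕ => l ⌊lam * (n : ℝ)⌋₊ / l n) Filter.atTop (nhds 1)


/-- The generalized inverse of a sequence: `rinv r n` is the least index `i ≥ 1` with
`r i ≥ n`. -/
noncomputable def rinv (r : ℕ → ℝ) (n : ℕ) : ℕ :=
  sInf {i : ℕ | 1 ≤ i ∧ (n : ℝ) ≤ r i}

namespace RVInverseAux

open Filter MeasureTheory Set
open scoped ENNReal NNReal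

/-! ### Elementary limit facts -/

lemma floor_div_tendsto (lam : ℝ) (hlam : 0 < lam) :
    Tendsto (fun n : ℕ => (⌊lam * (n:ℝ)⌋₊ : ℝ) / n) atTop (nhds lam) := by
  have h1 : Tendsto (fun n : ℕ => lam - 1 / (n:ℝ)) atTop (nhds lam) := by
    simpa using tendsto_const_nhds.sub (tendsto_one_div_atTop_nhds_zero_nat (𝕜 := ℝ))
  apply tendsto_of_tendsto_of_tendsto_of_le_of_le' h1 tendsto_const_nhds
  · filter_upwards [eventually_ge_atTop 1] with n hn
    have hn0 : (0:ℝ) < n := by exact_mod_cast hn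
    rw [sub_le_iff_le_add, ← add_div, le_div_iff₀ hn0]
    nlinarith [Nat.lt_floor_add_one (lam * (n:ℝ))]
  · filter_upwards [eventually_ge_atTop 1] with n hn
    have hn0 : (0:ℝ) < n := by exact_mod_cast hn
    rw [div_le_iff₀ hn0]
    exact Nat.floor_le (by positivity)

/-- pointwise ratio limit for `r` -/
lemma rv_ratio {r : ℕ → ℝ} {ρ : ℝ} {l : ℕ → ℝ}
    (hl1 : ∀ n, 1 ≤ n → r n = (n : ℝ) ^ ρ * l n)
    (hsv : ∀ lam : ℝ, 0 < lam →
      Tendsto (fun n : ℕ => l ⌊lam * (n:ℝ)⌋₊ / l n) atTop (nhds 1))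
    (lam : ℝ) (hlam : 0 < lam) :
    Tendsto (fun n : ℕ => r ⌊lam * (n:ℝ)⌋₊ / r n) atTop (nhds (lam ^ ρ)) := by
  have hfl : Tendsto (fun n : ℕ => ((⌊lam * (n:ℝ)⌋₊ : ℝ) / n) ^ ρ) atTop
      (nhds (lam ^ ρ)) :=
    ((Real.continuousAt_rpow_const lam ρ (Or.inl hlam.ne')).tendsto).comp
      (floor_div_tendsto lam hlam)
  have hmul := hfl.mul (hsv lam hlam)
  rw [mul_one] at hmul
  apply hmul.congr'
  have hev : ∀ᶠ n : ℕ in atTop, (1:ℝ) ≤ lam * n := by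
    have := (tendsto_natCast_atTop_atTop (R := ℝ)).const_mul_atTop hlam
    exact this.eventually_ge_atTop 1
  filter_upwards [hev, eventually_ge_atTop 1] with n h1 hn1
  have hfl1 : 1 ≤ ⌊lam * (n:ℝ)⌋₊ := Nat.le_floor (by exact_mod_cast h1)
  have hn0 : (0:ℝ) < n := by exact_mod_cast hn1
  have hf0 : (0:ℝ) < (⌊lam * (n:ℝ)⌋₊ : ℝ) := by exact_mod_cast hfl1
  rw [hl1 _ hfl1, hl1 _ hn1, Real.div_rpow hf0.le hn0.le]
  rw [div_mul_div_comm]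

lemma log_l_tendsto {l : ℕ → ℝ}
    (hlpos : ∀ n, 1 ≤ n → 0 < l n)
    (hsv : ∀ lam : ℝ, 0 < lam →
      Tendsto (fun n : ℕ => l ⌊lam * (n:ℝ)⌋₊ / l n) atTop (nhds 1))
    (s : ℝ) (hs : 1 ≤ s) :
    Tendsto (fun n : ℕ => Real.log (l ⌊s * (n:ℝ)⌋₊) - Real.log (l n)) atTop (nhds 0) := by
  have h0 : (0:ℝ) < s := lt_of_lt_of_le one_pos hs
  have h := (hsv s h0).log one_ne_zero
  rw [Real.log_one] at h
  apply h.congr'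
  filter_upwards [eventually_ge_atTop 1] with n hn1
  have h1 : (1:ℝ) ≤ s * n := by
    have : (1:ℝ) ≤ (n:ℝ) := by exact_mod_cast hn1
    nlinarith
  have hfl1 : 1 ≤ ⌊s * (n:ℝ)⌋₊ := Nat.le_floor (by exact_mod_cast h1)
  rw [Real.log_div (hlpos _ hfl1).ne' (hlpos _ hn1).ne']

/-! ### Windows and the counting argument -/

noncomputable def win (a j : ℕ) : Set ℝ :=
  Ico ((a:ℝ)/(2*(j:ℝ))) (((a:ℝ)+1)/(2*(j:ℝ)))

lemma mem_win_floor {a j : ℕ} (hj : 1 ≤ j) {s : ℝ} (hs : s ∈ win a j) :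
    ⌊s * ((2*j : ℕ):ℝ)⌋₊ = a := by
  have hj0 : (0:ℝ) < 2*(j:ℝ) := by
    have : (1:ℝ) ≤ (j:ℝ) := by exact_mod_cast hj
    linarith
  obtain ⟨h1, h2⟩ := hs
  have ha : (a:ℝ) ≤ s * (2*(j:ℝ)) := (div_le_iff₀ hj0).1 h1
  have hb : s * (2*(j:ℝ)) < (a:ℝ) + 1 := (lt_div_iff₀ hj0).1 h2
  have h0 : (0:ℝ) ≤ s * ((2*j : ℕ):ℝ) := by
    push_cast
    nlinarith [ha, Nat.cast_nonneg (α := ℝ) a]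
  rw [Nat.floor_eq_iff h0]
  push_cast
  exact ⟨by nlinarith, by nlinarith⟩

lemma win_subset {n a j : ℕ} (hj : 1 ≤ j) (h2j : 2*j ≤ a) (h4j : n ≤ 4*j)
    (ha : a ≤ 5*n) : win a j ⊆ Icc (1:ℝ) 11 := by
  intro x hx
  obtain ⟨h1, h2⟩ := hx
  have hj1 : (1:ℝ) ≤ (j:ℝ) := by exact_mod_cast hj
  have hj0 : (0:ℝ) < 2*(j:ℝ) := by linarith
  constructor
  · refine le_trans ((one_le_div hj0).2 ?_) h1
    exact_mod_cast h2j
  · refine le_of_lt (lt_of_lt_of_le h2 ((div_le_iff₀ hj0).2 ?_))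
    have han : (a:ℝ) ≤ 5*(n:ℝ) := by exact_mod_cast ha
    have hnj : (n:ℝ) ≤ 4*(j:ℝ) := by exact_mod_cast h4j
    nlinarith

lemma win_volume (a j : ℕ) :
    volume (win a j) = ENNReal.ofReal (1/(2*(j:ℝ))) := by
  rw [win, Real.volume_Ico]
  congr 1
  ring

lemma win_disjoint {n a : ℕ} (hna : n ≤ a) (J : Finset ℕ)
    (hJ : ∀ j ∈ J, 1 ≤ j ∧ 2*j ≤ n) :
    (↑J : Set ℕ).PairwiseDisjoint (fun j => win a j) := by
  intro j hj j' hj' hne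
  simp only [Finset.coe_mem, Finset.mem_coe] at hj hj'
  have key : ∀ p q : ℕ, p ∈ J → q ∈ J → p < q → Disjoint (win a p) (win a q) := by
    intro p q hp hq hpq
    obtain ⟨hp1, hp2⟩ := hJ p hp
    obtain ⟨hq1, hq2⟩ := hJ q hq
    rw [Set.disjoint_left]
    intro x hxp hxq
    have hp0 : (0:ℝ) < 2*(p:ℝ) := by
      have : (1:ℝ) ≤ (p:ℝ) := by exact_mod_cast hp1
      linarith
    have hq0 : (0:ℝ) < 2*(q:ℝ) := by
      have : (1:ℝ) ≤ (q:ℝ) := by exact_mod_cast hq1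
      linarith
    have h1 : ((a:ℝ)+1)/(2*(q:ℝ)) ≤ (a:ℝ)/(2*(p:ℝ)) := by
      rw [div_le_div_iff₀ hq0 hp0]
      have hpq' : (p:ℝ) + 1 ≤ (q:ℝ) := by exact_mod_cast hpq
      have hpa : (2:ℝ)*(p:ℝ) ≤ (a:ℝ) := by
        have : (2*p : ℕ) ≤ a := le_trans hp2 hna
        exact_mod_cast this
      nlinarith [Nat.cast_nonneg (α := ℝ) a, Nat.cast_nonneg (α := ℝ) p]
    exact absurd (lt_of_lt_of_le hxq.2 (le_trans h1 hxp.1)) (lt_irrefl x)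
  rcases lt_or_gt_of_ne hne with h | h
  · exact key _ _ hj hj' h
  · exact (key _ _ hj' hj h).symm

lemma bad_count {E : Set ℝ} (hEmeas : MeasurableSet E)
    (hED : E ⊆ Icc (1:ℝ) 11)
    (hEbig : ENNReal.ofReal (159/16) < volume E)
    {n a : ℕ} (hn0 : 0 < n) (hna : n ≤ a)
    (J' : Finset ℕ) (hJ : ∀ j ∈ J', 1 ≤ j ∧ 2*j ≤ n)
    (hdisj : (↑J' : Set ℕ).PairwiseDisjoint (fun j => win a j))
    (hsub : ∀ j ∈ J', win a j ⊆ Icc (1:ℝ) 11)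
    (hbad : ∀ j ∈ J', win a j ∩ E = ∅) :
    16 * J'.card < n := by
  set U : Set ℝ := ⋃ j ∈ J', win a j with hU
  have hUmeas : MeasurableSet U := by
    apply MeasurableSet.biUnion (J'.countable_toSet)
    intro j _; exact measurableSet_Ico
  have hUE : Disjoint U E := by
    rw [Set.disjoint_left]
    intro x hx hxE
    simp only [hU, Set.mem_iUnion] at hx
    obtain ⟨j, hj, hxj⟩ := hx
    have := hbad j hj
    exact absurd (Set.mem_inter hxj hxE) (by rw [this]; exact Set.notMem_empty x)
  have hUD : U ⊆ Icc (1:ℝ) 11 := Set.iUnion₂_subset hsub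
  have hsum : volume U = ∑ j ∈ J', ENNReal.ofReal (1/(2*(j:ℝ))) := by
    rw [hU, measure_biUnion_finset hdisj (fun j _ => measurableSet_Ico)]
    exact Finset.sum_congr rfl fun j _ => win_volume a j
  have hcard : (J'.card : ℝ≥0∞) * ENNReal.ofReal (1/(n:ℝ)) ≤ volume U := by
    rw [hsum, ← nsmul_eq_mul]
    apply Finset.card_nsmul_le_sum
    intro j hj
    obtain ⟨hj1, hj2⟩ := hJ j hj
    apply ENNReal.ofReal_le_ofReal
    apply one_div_le_one_div_of_le
    · have : (1:ℝ) ≤ (j:ℝ) := by exact_mod_cast hj1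
      linarith
    · exact_mod_cast hj2
  have htotal : volume U + volume E ≤ ENNReal.ofReal 10 := by
    rw [← measure_union hUE hEmeas]
    calc volume (U ∪ E) ≤ volume (Icc (1:ℝ) 11) :=
          measure_mono (Set.union_subset hUD hED)
    _ = ENNReal.ofReal 10 := by rw [Real.volume_Icc]; norm_num
  have hXne : (J'.card : ℝ≥0∞) * ENNReal.ofReal (1/(n:ℝ)) ≠ ⊤ :=
    ENNReal.mul_ne_top (ENNReal.natCast_ne_top _) ENNReal.ofReal_ne_top
  have hstrict : (J'.card : ℝ≥0∞) * ENNReal.ofReal (1/(n:ℝ)) + ENNReal.ofReal (159/16)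
      < ENNReal.ofReal 10 := by
    calc (J'.card : ℝ≥0∞) * ENNReal.ofReal (1/(n:ℝ)) + ENNReal.ofReal (159/16)
        < (J'.card : ℝ≥0∞) * ENNReal.ofReal (1/(n:ℝ)) + volume E :=
          ENNReal.add_lt_add_left hXne hEbig
    _ ≤ volume U + volume E := by gcongr
    _ ≤ ENNReal.ofReal 10 := htotal
  have hreal : (J'.card : ℝ) * (1/(n:ℝ)) + 159/16 < 10 := by
    have h1 : (J'.card : ℝ≥0∞) * ENNReal.ofReal (1/(n:ℝ)) + ENNReal.ofReal (159/16)
        = ENNReal.ofReal ((J'.card : ℝ) * (1/(n:ℝ)) + 159/16) := by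
      rw [ENNReal.ofReal_add (by positivity) (by norm_num),
        ENNReal.ofReal_mul (by positivity), ENNReal.ofReal_natCast]
    rw [h1] at hstrict
    exact (ENNReal.ofReal_lt_ofReal_iff (by norm_num)).1 hstrict
  have hnR : (0:ℝ) < (n:ℝ) := by exact_mod_cast hn0
  have : (16 * J'.card : ℝ) < (n:ℝ) := by
    rw [mul_one_div] at hreal
    have h2 : (J'.card : ℝ)/n < 1/16 := by linarith
    rw [div_lt_div_iff₀ hnR (by norm_num)] at h2
    linarith
  exact_mod_cast this

/-! ### The key uniform estimate -/

lemma key_uniform {l : ℕ → ℝ}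
    (hlpos : ∀ n, 1 ≤ n → 0 < l n)
    (hsv : ∀ lam : ℝ, 0 < lam →
      Tendsto (fun n : ℕ => l ⌊lam * (n:ℝ)⌋₊ / l n) atTop (nhds 1))
    (ε : ℝ) (hε : 0 < ε) :
    ∃ N : ℕ, 1 ≤ N ∧ ∀ n, N ≤ n → ∀ m, n ≤ m → m ≤ 5 * n →
      |Real.log (l m) - Real.log (l n)| ≤ ε := by
  classical
  set g : ℕ → ℝ → ℝ := fun k s => Real.log (l ⌊s * (k:ℝ)⌋₊) - Real.log (l k) with hgdef
  have hgm : ∀ j : ℕ, Measurable (g j) := by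
    intro j
    have h1 : Measurable fun s : ℝ => (⌊s * ((j:ℕ):ℝ)⌋₊ : ℕ) :=
      Nat.measurable_floor.comp (measurable_id.mul_const (((j:ℕ):ℝ)))
    have h2 : Measurable fun k : ℕ => Real.log (l k) := measurable_from_top
    exact (h2.comp h1).sub measurable_const
  set G : ℕ → Set ℝ := fun k =>
    Icc (1:ℝ) 11 ∩ ⋂ (j : ℕ), ⋂ (_ : k ≤ j), {s | |g j s| ≤ ε/2} with hGdef
  have hGmeas : ∀ k, MeasurableSet (G k) := fun k =>
    measurableSet_Icc.inter (MeasurableSet.iInter fun j => MeasurableSet.iInter fun _ =>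
      measurableSet_le (hgm j).abs measurable_const)
  have hGmem : ∀ k s, s ∈ G k ↔ (s ∈ Icc (1:ℝ) 11 ∧ ∀ j, k ≤ j → |g j s| ≤ ε/2) := by
    intro k s
    simp only [hGdef, mem_inter_iff, mem_iInter, mem_setOf_eq]
  have hGmono : Monotone G := by
    intro k k' hkk' s hs
    rw [hGmem] at hs ⊢
    exact ⟨hs.1, fun j hj => hs.2 j (le_trans hkk' hj)⟩
  have hUnion : Icc (1:ℝ) 11 ⊆ ⋃ k, G k := by
    intro s hs
    have htt := log_l_tendsto hlpos hsv s hs.1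
    have hmem : Icc (-(ε/2)) (ε/2) ∈ nhds (0:ℝ) := Icc_mem_nhds (by linarith) (by linarith)
    have hev : ∀ᶠ j : ℕ in atTop, |g j s| ≤ ε/2 := by
      filter_upwards [htt.eventually hmem] with j hj
      exact abs_le.2 ⟨hj.1, hj.2⟩
    obtain ⟨k, hk⟩ := eventually_atTop.1 hev
    exact mem_iUnion.2 ⟨k, (hGmem k s).2 ⟨hs, hk⟩⟩
  have htend := tendsto_measure_iUnion_atTop (μ := volume) hGmono
  have hlim_big : ENNReal.ofReal (159/16) < volume (⋃ k, G k) := by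
    calc ENNReal.ofReal (159/16) < ENNReal.ofReal 10 := by
          rw [ENNReal.ofReal_lt_ofReal_iff (by norm_num)]; norm_num
    _ = volume (Icc (1:ℝ) 11) := by rw [Real.volume_Icc]; norm_num
    _ ≤ volume (⋃ k, G k) := measure_mono hUnion
  obtain ⟨k₀, hk₀⟩ := ((tendsto_order.1 htend).1 _ hlim_big).exists
  set E := G k₀ with hE
  refine ⟨max (2*k₀+2) 32, le_trans (by norm_num) (le_max_right _ _), ?_⟩
  intro n hn m hnm hm5
  have hn32 : 32 ≤ n := le_trans (le_max_right _ _) hn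
  have hk₀n : 2*k₀+2 ≤ n := le_trans (le_max_left _ _) hn
  set J := Finset.Icc ((n+3)/4) (n/2) with hJdef
  have hJprop : ∀ j ∈ J, 1 ≤ j ∧ 2*j ≤ n ∧ n ≤ 4*j ∧ k₀ ≤ 2*j := by
    intro j hj
    rw [hJdef, Finset.mem_Icc] at hj
    omega
  have hgood : ∃ j ∈ J, (win n j ∩ E).Nonempty ∧ (win m j ∩ E).Nonempty := by
    by_contra hcon
    push_neg at hcon
    set JW := J.filter (fun j => win n j ∩ E = ∅) with hJW
    set JV := J.filter (fun j => win m j ∩ E = ∅) with hJV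
    have hJsub : J ⊆ JW ∪ JV := by
      intro j hj
      rcases eq_or_ne (win n j ∩ E) ∅ with h | h
      · exact Finset.mem_union_left _ (Finset.mem_filter.2 ⟨hj, h⟩)
      · have h1 : (win n j ∩ E).Nonempty := nonempty_iff_ne_empty.2 h
        have h2 := hcon j hj h1
        exact Finset.mem_union_right _ (Finset.mem_filter.2 ⟨hj, h2⟩)
    have hWprop : ∀ j ∈ JW, 1 ≤ j ∧ 2*j ≤ n := by
      intro j hj
      have := hJprop j (Finset.mem_of_mem_filter j hj)
      exact ⟨this.1, this.2.1⟩
    have hVprop : ∀ j ∈ JV, 1 ≤ j ∧ 2*j ≤ n := by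
      intro j hj
      have := hJprop j (Finset.mem_of_mem_filter j hj)
      exact ⟨this.1, this.2.1⟩
    have hW := bad_count (hGmeas k₀) inter_subset_left hk₀ (by omega : 0 < n)
      (le_refl n) JW hWprop (win_disjoint (le_refl n) JW hWprop)
      (fun j hj => by
        have h := hJprop j (Finset.mem_of_mem_filter j hj)
        exact win_subset h.1 h.2.1 h.2.2.1 (by omega))
      (fun j hj => (Finset.mem_filter.1 hj).2)
    have hV := bad_count (hGmeas k₀) inter_subset_left hk₀ (by omega : 0 < n)
      hnm JV hVprop (win_disjoint hnm JV hVprop)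
      (fun j hj => by
        have h := hJprop j (Finset.mem_of_mem_filter j hj)
        exact win_subset h.1 (le_trans h.2.1 hnm) h.2.2.1 hm5)
      (fun j hj => (Finset.mem_filter.1 hj).2)
    have hcard : J.card ≤ JW.card + JV.card :=
      le_trans (Finset.card_le_card hJsub) (Finset.card_union_le _ _)
    have hJcard : J.card = n/2 + 1 - (n+3)/4 := by
      rw [hJdef, Nat.card_Icc]
    omega
  obtain ⟨j, hjJ, ⟨t, htW, htE⟩, ⟨s, hsV, hsE⟩⟩ := hgood
  obtain ⟨hj1, hj2n, hj4, hjk₀⟩ := hJprop j hjJ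
  have hfloor_t : ⌊t * ((2*j:ℕ):ℝ)⌋₊ = n := mem_win_floor hj1 htW
  have hfloor_s : ⌊s * ((2*j:ℕ):ℝ)⌋₊ = m := mem_win_floor hj1 hsV
  have hEt : |g (2*j) t| ≤ ε/2 := ((hGmem k₀ t).1 htE).2 (2*j) hjk₀
  have hEs : |g (2*j) s| ≤ ε/2 := ((hGmem k₀ s).1 hsE).2 (2*j) hjk₀
  have hdiff : g (2*j) s - g (2*j) t = Real.log (l m) - Real.log (l n) := by
    simp only [hgdef]
    rw [hfloor_s, hfloor_t]
    ring
  calc |Real.log (l m) - Real.log (l n)| = |g (2*j) s - g (2*j) t| := by rw [hdiff]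
  _ ≤ |g (2*j) s| + |g (2*j) t| := abs_sub _ _
  _ ≤ ε/2 + ε/2 := add_le_add hEs hEt
  _ = ε := by ring

/-! ### Almost monotonicity and divergence -/

lemma almost_mono {r : ℕ → ℝ} {ρ : ℝ} {l : ℕ → ℝ} (hρ : 0 < ρ)
    (hrpos : ∀ n, 1 ≤ n → 0 < r n)
    (hl1 : ∀ n, 1 ≤ n → r n = (n:ℝ)^ρ * l n)
    (hlpos : ∀ n, 1 ≤ n → 0 < l n)
    (hsv : ∀ lam : ℝ, 0 < lam →
      Tendsto (fun n : ℕ => l ⌊lam * (n:ℝ)⌋₊ / l n) atTop (nhds 1))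
    (A : ℝ) (hA : 1 < A) :
    ∃ N : ℕ, 1 ≤ N ∧ ∀ i n : ℕ, N ≤ i → i ≤ n → r i ≤ A * r n := by
  set ε₁ := min (ρ * Real.log 4) (Real.log A) with hε₁
  have hlog4 : (0:ℝ) < Real.log 4 := Real.log_pos (by norm_num)
  have hε₁pos : 0 < ε₁ := lt_min (by positivity) (Real.log_pos hA)
  obtain ⟨N₁, hN₁1, hKey⟩ := key_uniform hlpos hsv ε₁ hε₁pos
  refine ⟨max N₁ 3, le_trans (by norm_num) (le_max_right _ _), ?_⟩
  have hlog : ∀ k : ℕ, 1 ≤ k → Real.log (r k) = ρ * Real.log k + Real.log (l k) := by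
    intro k hk
    have hk0 : (0:ℝ) < k := by exact_mod_cast hk
    rw [hl1 k hk, Real.log_mul (by positivity) (hlpos k hk).ne', Real.log_rpow hk0]
  have main : ∀ n i : ℕ, max N₁ 3 ≤ i → i ≤ n →
      Real.log (r i) ≤ Real.log (r n) + ε₁ := by
    intro n
    induction n using Nat.strong_induction_on with
    | _ n ih =>
      intro i hNi hin
      have hi3 : 3 ≤ i := le_trans (le_max_right N₁ 3) hNi
      have hi1 : 1 ≤ i := by omega
      have hiN₁ : N₁ ≤ i := le_trans (le_max_left _ _) hNi
      have hi0 : (0:ℝ) < i := by exact_mod_cast hi1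
      have hn1 : 1 ≤ n := le_trans hi1 hin
      have hn0 : (0:ℝ) < n := by exact_mod_cast hn1
      by_cases hcase : n ≤ 5*i
      · have h := hKey i hiN₁ n hin hcase
        have hlogin : Real.log (i:ℝ) ≤ Real.log (n:ℝ) :=
          Real.log_le_log hi0 (by exact_mod_cast hin)
        rw [hlog i hi1, hlog n hn1]
        have habs := abs_le.1 h
        nlinarith [mul_le_mul_of_nonneg_left hlogin hρ.le]
      · push_neg at hcase
        have hn'lt : n/4 < n := by omega
        have hin' : i ≤ n/4 := by omega
        have hIH := ih (n/4) hn'lt i hNi hin'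
        have hn'3 : 3 ≤ n/4 := le_trans hi3 hin'
        have hn'1 : 1 ≤ n/4 := by omega
        have hn'N₁ : N₁ ≤ n/4 := le_trans hiN₁ hin'
        have hkey2 := hKey (n/4) hn'N₁ n (by omega) (by omega)
        have hn'0 : (0:ℝ) < ((n/4 : ℕ):ℝ) := by exact_mod_cast hn'1
        have hq : ((n/4 : ℕ):ℝ) ≤ (n:ℝ)/4 := Nat.cast_div_le
        have hlogq : Real.log ((n/4 : ℕ):ℝ) ≤ Real.log (n:ℝ) - Real.log 4 := by
          rw [← Real.log_div hn0.ne' (by norm_num)]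
          exact Real.log_le_log hn'0 hq
        have habs := abs_le.1 hkey2
        have hε₁le : ε₁ ≤ ρ * Real.log 4 := min_le_left _ _
        rw [hlog i hi1] at hIH ⊢
        rw [hlog (n/4) hn'1] at hIH
        rw [hlog n hn1]
        nlinarith [mul_le_mul_of_nonneg_left hlogq hρ.le]
  intro i n hNi hin
  have h := main n i hNi hin
  have hi1 : 1 ≤ i := by
    have : 3 ≤ i := le_trans (le_max_right N₁ 3) hNi
    omega
  have hn1 : 1 ≤ n := le_trans hi1 hin
  have hrn := hrpos n hn1
  have hri := hrpos i hi1
  rw [← Real.exp_log hri, ← Real.exp_log (show (0:ℝ) < A * r n by positivity)]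
  apply Real.exp_le_exp.2
  rw [Real.log_mul (by positivity) hrn.ne']
  have : ε₁ ≤ Real.log A := min_le_right _ _
  linarith

lemma r_atTop {r : ℕ → ℝ} {ρ : ℝ} {l : ℕ → ℝ} (hρ : 0 < ρ)
    (hrpos : ∀ n, 1 ≤ n → 0 < r n)
    (hl1 : ∀ n, 1 ≤ n → r n = (n:ℝ)^ρ * l n)
    (hlpos : ∀ n, 1 ≤ n → 0 < l n)
    (hsv : ∀ lam : ℝ, 0 < lam →
      Tendsto (fun n : ℕ => l ⌊lam * (n:ℝ)⌋₊ / l n) atTop (nhds 1))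
    (hratio : ∀ lam : ℝ, 0 < lam →
      Tendsto (fun n : ℕ => r ⌊lam * (n:ℝ)⌋₊ / r n) atTop (nhds (lam ^ ρ))) :
    Tendsto r atTop atTop := by
  have h2 : (1:ℝ) < 2 ^ ρ := Real.one_lt_rpow_iff_of_pos (by norm_num) |>.2 (by norm_num; exact hρ)
  set B : ℝ := (1 + 2 ^ ρ)/2 with hB
  have hB1 : 1 < B := by rw [hB]; linarith
  have hBlt : B < 2 ^ ρ := by rw [hB]; linarith
  have hev : ∀ᶠ k : ℕ in atTop, B * r k ≤ r (2 * k) := by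
    have h := (tendsto_order.1 (hratio 2 (by norm_num))).1 B hBlt
    filter_upwards [h, eventually_ge_atTop 1] with k hk hk1
    have hfl : ⌊(2:ℝ) * (k:ℝ)⌋₊ = 2 * k := by
      rw [show (2:ℝ) * (k:ℝ) = ((2*k : ℕ):ℝ) by push_cast; ring, Nat.floor_natCast]
    rw [hfl] at hk
    have hrk := hrpos k hk1
    exact le_of_lt ((lt_div_iff₀ hrk).1 hk)
  obtain ⟨N₃, hN₃⟩ := eventually_atTop.1 hev
  obtain ⟨N₄, hN₄1, hmono⟩ := almost_mono hρ hrpos hl1 hlpos hsv 2 (by norm_num)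
  set N₅ := max (max N₃ 1) N₄ with hN₅
  have hN₅1 : 1 ≤ N₅ := le_trans (le_trans (le_max_right N₃ 1) (le_max_left _ _)) (le_refl _)
  have hN₅3 : N₃ ≤ N₅ := le_trans (le_trans (le_max_left N₃ 1) (le_max_left _ _)) (le_refl _)
  have hN₅4 : N₄ ≤ N₅ := le_max_right _ _
  have hB0 : (0:ℝ) ≤ B := by linarith
  have hpow : ∀ p : ℕ, B ^ p * r N₅ ≤ r (2 ^ p * N₅) := by
    intro p
    induction p with
    | zero => simp
    | succ p ihp =>
      have hstep := hN₃ (2 ^ p * N₅)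
        (le_trans hN₅3 (Nat.le_mul_of_pos_left _ (pow_pos (by norm_num) p)))
      calc B ^ (p+1) * r N₅ = B * (B ^ p * r N₅) := by ring
      _ ≤ B * r (2 ^ p * N₅) := by
          apply mul_le_mul_of_nonneg_left ihp hB0
      _ ≤ r (2 * (2 ^ p * N₅)) := hstep
      _ = r (2 ^ (p+1) * N₅) := by ring_nf
  rw [tendsto_atTop]
  intro C
  have hrN₅ := hrpos N₅ hN₅1
  have hBp : Tendsto (fun p : ℕ => B ^ p) atTop atTop :=
    tendsto_pow_atTop_atTop_of_one_lt hB1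
  obtain ⟨p, hp⟩ := (hBp.eventually_ge_atTop (2 * C / r N₅)).exists
  refine eventually_atTop.2 ⟨2 ^ p * N₅, fun n hn => ?_⟩
  have hNp : N₄ ≤ 2 ^ p * N₅ :=
    le_trans hN₅4 (Nat.le_mul_of_pos_left _ (pow_pos (by norm_num) p))
  have h1 : r (2 ^ p * N₅) ≤ 2 * r n := hmono (2 ^ p * N₅) n hNp hn
  have h2' : B ^ p * r N₅ ≤ r (2 ^ p * N₅) := hpow p
  have h3 : 2 * C ≤ B ^ p * r N₅ := by
    rw [div_le_iff₀ hrN₅] at hp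
    linarith
  linarith

/-! ### Basic facts about the generalized inverse -/

lemma rinv_mem {r : ℕ → ℝ} (h : Tendsto r atTop atTop) (n : ℕ) :
    1 ≤ rinv r n ∧ (n : ℝ) ≤ r (rinv r n) := by
  have hne : {i : ℕ | 1 ≤ i ∧ (n : ℝ) ≤ r i}.Nonempty := by
    obtain ⟨i, hi1, hi2⟩ := ((eventually_ge_atTop 1).and (h.eventually_ge_atTop (n:ℝ))).exists
    exact ⟨i, hi1, hi2⟩
  exact Nat.sInf_mem hne

lemma rinv_min {r : ℕ → ℝ} (n : ℕ) {i : ℕ} (hi : 1 ≤ i) (hlt : i < rinv r n) : r i < n := by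
  have := Nat.notMem_of_lt_sInf (s := {i : ℕ | 1 ≤ i ∧ (n : ℝ) ≤ r i}) hlt
  simp only [mem_setOf_eq, not_and, not_le] at this
  exact this hi

lemma rinv_le {r : ℕ → ℝ} {i n : ℕ} (hi : 1 ≤ i) (hr : (n:ℝ) ≤ r i) : rinv r n ≤ i :=
  Nat.sInf_le ⟨hi, hr⟩

lemma rinv_atTop {r : ℕ → ℝ} (h : Tendsto r atTop atTop) :
    Tendsto (rinv r) atTop atTop := by
  rw [tendsto_atTop]
  intro M
  set C := (Finset.Icc 0 M).sup' ⟨0, by simp⟩ r with hC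
  have hCle : ∀ i, i ≤ M → r i ≤ C := fun i hi =>
    Finset.le_sup' r (Finset.mem_Icc.2 ⟨Nat.zero_le _, hi⟩)
  filter_upwards [eventually_ge_atTop (⌈C⌉₊ + 1)] with n hn
  by_contra hcon
  push_neg at hcon
  have h1 := (rinv_mem h n).2
  have h2 : r (rinv r n) ≤ C := hCle _ (by omega)
  have h3 : C < (n:ℝ) := by
    have hc1 : C ≤ (⌈C⌉₊ : ℝ) := Nat.le_ceil C
    have h4 : ((⌈C⌉₊ + 1 : ℕ):ℝ) ≤ (n:ℝ) := by exact_mod_cast hn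
    push_cast at h4
    linarith
  linarith

lemma smallmax {r : ℕ → ℝ} {ρ : ℝ} (hrpos : ∀ n, 1 ≤ n → 0 < r n)
    (hmono' : ∀ A : ℝ, 1 < A → ∃ N : ℕ, 1 ≤ N ∧ ∀ i n : ℕ, N ≤ i → i ≤ n → r i ≤ A * r n)
    (hratio : ∀ lam : ℝ, 0 < lam →
      Tendsto (fun n : ℕ => r ⌊lam * (n:ℝ)⌋₊ / r n) atTop (nhds (lam ^ ρ)))
    (hrtop : Tendsto r atTop atTop)
    (c' θ : ℝ) (hc' : 0 < c') (hθ : c' ^ ρ < θ) :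
    ∀ᶠ k : ℕ in atTop, ∀ i : ℕ, 1 ≤ i → (i:ℝ) ≤ c' * k → r i ≤ θ * r k := by
  have hcρ : 0 < c' ^ ρ := Real.rpow_pos_of_pos hc' ρ
  have hθ0 : 0 < θ := lt_trans hcρ hθ
  set A := Real.sqrt (θ / c' ^ ρ) with hA
  have hq : 1 < θ / c' ^ ρ := (one_lt_div hcρ).2 hθ
  have hA1 : 1 < A := by
    rw [hA, show (1:ℝ) = Real.sqrt 1 by rw [Real.sqrt_one]]
    exact Real.sqrt_lt_sqrt (by norm_num) hq
  have hA2 : A * A = θ / c' ^ ρ := Real.mul_self_sqrt (by positivity)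
  obtain ⟨N₄, hN₄1, hmono⟩ := hmono' A hA1
  have hevratio : ∀ᶠ k : ℕ in atTop, r ⌊c' * (k:ℝ)⌋₊ ≤ A * c' ^ ρ * r k := by
    have hlt : c' ^ ρ < A * c' ^ ρ := by nlinarith
    filter_upwards [(tendsto_order.1 (hratio c' hc')).2 _ hlt, eventually_ge_atTop 1]
      with k hk hk1
    have hrk := hrpos k hk1
    rw [div_lt_iff₀ hrk] at hk
    linarith
  set Cm := (Finset.Icc 0 N₄).sup' ⟨0, by simp⟩ r with hCm
  have hCmle : ∀ i, i ≤ N₄ → r i ≤ Cm := fun i hi =>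
    Finset.le_sup' r (Finset.mem_Icc.2 ⟨Nat.zero_le _, hi⟩)
  have hevC : ∀ᶠ k : ℕ in atTop, Cm ≤ θ * r k :=
    (hrtop.const_mul_atTop hθ0).eventually_ge_atTop Cm
  filter_upwards [hevratio, hevC, eventually_ge_atTop 1] with k hk1 hk2 hk3
  intro i hi1 hik
  by_cases hiN : i ≤ N₄
  · exact le_trans (hCmle i hiN) hk2
  · push_neg at hiN
    have hifl : i ≤ ⌊c' * (k:ℝ)⌋₊ := Nat.le_floor hik
    have h1 : r i ≤ A * r ⌊c' * (k:ℝ)⌋₊ := hmono i _ (by omega) hifl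
    calc r i ≤ A * (A * c' ^ ρ * r k) :=
          le_trans h1 (mul_le_mul_of_nonneg_left hk1 (by positivity))
    _ = (A * A) * c' ^ ρ * r k := by ring
    _ = θ / c' ^ ρ * c' ^ ρ * r k := by rw [hA2]
    _ = θ * r k := by field_simp

/-! ### The main asymptotics -/

lemma partA {r : ℕ → ℝ} {ρ : ℝ} (hρ : 0 < ρ) (hrpos : ∀ n, 1 ≤ n → 0 < r n)
    (hratio : ∀ lam : ℝ, 0 < lam →
      Tendsto (fun n : ℕ => r ⌊lam * (n:ℝ)⌋₊ / r n) atTop (nhds (lam ^ ρ)))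
    (hrtop : Tendsto r atTop atTop) :
    Tendsto (fun n : ℕ => r (rinv r n) / n) atTop (nhds 1) := by
  rw [Metric.tendsto_atTop]
  intro ε hε
  rw [← eventually_atTop]
  set w := (1 + ε/2) ^ (-(1/ρ)) with hw
  have h1e : (0:ℝ) < 1 + ε/2 := by linarith
  have hw0 : 0 < w := Real.rpow_pos_of_pos h1e _
  have hinvρ : 0 < 1/ρ := by positivity
  have hw1 : w < 1 := Real.rpow_lt_one_of_one_lt_of_neg (by linarith) (by linarith)
  have hwρ : w ^ ρ = (1+ε/2)⁻¹ := by
    rw [hw, ← Real.rpow_mul (le_of_lt h1e), show -(1/ρ) * ρ = -1 by field_simp,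
      Real.rpow_neg_one]
  have hlt : (1+ε)⁻¹ < w ^ ρ := by
    rw [hwρ]
    apply inv_strictAnti₀ h1e (by linarith)
  have hevk : ∀ᶠ k : ℕ in atTop,
      r k < (1+ε) * r ⌊w * (k:ℝ)⌋₊ ∧ 1 ≤ ⌊w * (k:ℝ)⌋₊ ∧ ⌊w * (k:ℝ)⌋₊ < k := by
    have hfl1 : ∀ᶠ k : ℕ in atTop, (1:ℝ) ≤ w * k :=
      ((tendsto_natCast_atTop_atTop (R := ℝ)).const_mul_atTop hw0).eventually_ge_atTop 1
    filter_upwards [(tendsto_order.1 (hratio w hw0)).1 _ hlt, hfl1, eventually_ge_atTop 1]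
      with k hk hk1 hk2
    have hfl : 1 ≤ ⌊w * (k:ℝ)⌋₊ := Nat.le_floor (by exact_mod_cast hk1)
    have hkpos : (0:ℝ) < k := by exact_mod_cast hk2
    have hflk : ⌊w * (k:ℝ)⌋₊ < k := by
      have h5 : (⌊w * (k:ℝ)⌋₊:ℝ) ≤ w * k := Nat.floor_le (by positivity)
      have h6 : (⌊w * (k:ℝ)⌋₊:ℝ) < k := lt_of_le_of_lt h5 (by nlinarith)
      exact_mod_cast h6
    refine ⟨?_, hfl, hflk⟩
    have hrk := hrpos k hk2
    rw [lt_div_iff₀ hrk] at hk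
    have hpos1 : (0:ℝ) < 1 + ε := by linarith
    have := mul_lt_mul_of_pos_left hk hpos1
    rw [← mul_assoc, mul_inv_cancel₀ hpos1.ne', one_mul] at this
    linarith
  filter_upwards [(rinv_atTop hrtop).eventually hevk, eventually_ge_atTop 1] with n hn hn1
  obtain ⟨hm1, hm2, hm3⟩ := hn
  have hspec := (rinv_mem hrtop n).2
  have hmin := rinv_min n hm2 hm3
  have hn0 : (0:ℝ) < n := by exact_mod_cast hn1
  rw [Real.dist_eq, abs_lt]
  have hup : r (rinv r n) < (1+ε) * n := by nlinarith
  constructor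
  · have hge : (1:ℝ) ≤ r (rinv r n) / n := (one_le_div hn0).2 hspec
    linarith
  · have : r (rinv r n) / n < 1 + ε := (div_lt_iff₀ hn0).2 (by linarith)
    linarith

lemma partB {r : ℕ → ℝ} {ρ : ℝ} (hρ : 0 < ρ) (hrpos : ∀ n, 1 ≤ n → 0 < r n)
    (hmono' : ∀ A : ℝ, 1 < A → ∃ N : ℕ, 1 ≤ N ∧ ∀ i n : ℕ, N ≤ i → i ≤ n → r i ≤ A * r n)
    (hratio : ∀ lam : ℝ, 0 < lam →
      Tendsto (fun n : ℕ => r ⌊lam * (n:ℝ)⌋₊ / r n) atTop (nhds (lam ^ ρ)))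
    (hrtop : Tendsto r atTop atTop) :
    Tendsto (fun n : ℕ => (rinv r ⌊r n⌋₊ : ℝ) / n) atTop (nhds 1) := by
  rw [Metric.tendsto_atTop]
  intro ε hε
  rw [← eventually_atTop]
  set ε' := min ε (1/2) with hε'
  have hε'pos : 0 < ε' := lt_min hε (by norm_num)
  have hε'le : ε' ≤ ε := min_le_left _ _
  have hε'half : ε' ≤ 1/2 := min_le_right _ _
  set c' := 1 - ε' with hc'
  have hc'0 : 0 < c' := by rw [hc']; linarith
  have hc'1 : c' < 1 := by rw [hc']; linarith
  have hcρ1 : c' ^ ρ < 1 := Real.rpow_lt_one hc'0.le hc'1 hρ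
  have hcρ0 : 0 < c' ^ ρ := Real.rpow_pos_of_pos hc'0 _
  set θ := (1 + c' ^ ρ)/2 with hθ
  have hθgt : c' ^ ρ < θ := by rw [hθ]; linarith
  have hθ1 : θ < 1 := by rw [hθ]; linarith
  have hθ0 : 0 < θ := by rw [hθ]; linarith
  have hsm := smallmax hrpos hmono' hratio hrtop c' θ hc'0 hθgt
  have hev2 : ∀ᶠ n : ℕ in atTop, 2/(1-θ) ≤ r n := hrtop.eventually_ge_atTop _
  filter_upwards [hsm, hev2, eventually_ge_atTop 1] with n hn1 hn2 hn3
  have hrn0 : 0 < r n := hrpos n hn3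
  have hub : rinv r ⌊r n⌋₊ ≤ n := rinv_le hn3 (Nat.floor_le hrn0.le)
  have hspec := (rinv_mem hrtop ⌊r n⌋₊).2
  have hflgt : r n - 1 < (⌊r n⌋₊:ℝ) := Nat.sub_one_lt_floor _
  have hlow : c' * n < (rinv r ⌊r n⌋₊ : ℝ) := by
    by_contra hcon
    push_neg at hcon
    have h4 : r (rinv r ⌊r n⌋₊) ≤ θ * r n := hn1 _ (rinv_mem hrtop _).1 hcon
    have h5 : (1-θ) * r n ≥ 2 := by
      have h6 : (0:ℝ) < 1 - θ := by linarith
      rw [ge_iff_le, ← div_le_iff₀' h6] at *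
      linarith [hn2]
    linarith
  have hn0 : (0:ℝ) < n := by exact_mod_cast hn3
  rw [Real.dist_eq, abs_lt]
  constructor
  · have h7 : c' < (rinv r ⌊r n⌋₊ : ℝ)/n := (lt_div_iff₀ hn0).2 hlow
    have h8 : 1 - ε ≤ c' := by rw [hc']; linarith
    linarith
  · have h9 : (rinv r ⌊r n⌋₊ : ℝ)/n ≤ 1 := (div_le_one hn0).2 (by exact_mod_cast hub)
    linarith

lemma rpow_aux {ρ : ℝ} (lam u : ℝ) (hlam : 0 < lam) (hρ : 0 < ρ) (hu : 0 ≤ u) :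
    (lam ^ (1/ρ) * u) ^ ρ = lam * u ^ ρ := by
  rw [Real.mul_rpow (by positivity) hu, ← Real.rpow_mul hlam.le,
    one_div_mul_cancel hρ.ne', Real.rpow_one]

lemma partUB {r : ℕ → ℝ} {ρ : ℝ} (hρ : 0 < ρ) (hrpos : ∀ n, 1 ≤ n → 0 < r n)
    (hratio : ∀ lam : ℝ, 0 < lam →
      Tendsto (fun n : ℕ => r ⌊lam * (n:ℝ)⌋₊ / r n) atTop (nhds (lam ^ ρ)))
    (hrtop : Tendsto r atTop atTop)
    (lam δ : ℝ) (hlam : 0 < lam) (hδ : 0 < δ) :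
    ∀ᶠ n : ℕ in atTop,
      (rinv r ⌊lam * (n:ℝ)⌋₊ : ℝ) ≤ lam ^ (1/ρ) * (1+δ) * rinv r n := by
  set c := lam ^ (1/ρ) * (1+δ) with hc
  have hc0 : 0 < c := by
    have := Real.rpow_pos_of_pos hlam (1/ρ)
    rw [hc]; positivity
  have hcρ : c ^ ρ = lam * (1+δ) ^ ρ := rpow_aux lam (1+δ) hlam hρ (by linarith)
  have hclam : lam < c ^ ρ := by
    rw [hcρ]
    have h1 : (1:ℝ) < (1+δ) ^ ρ :=
      (Real.one_lt_rpow_iff_of_pos (by linarith)).2 (Or.inl ⟨by linarith, hρ⟩)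
    nlinarith
  have hevk : ∀ᶠ k : ℕ in atTop,
      lam * r k < r ⌊c * (k:ℝ)⌋₊ ∧ 1 ≤ ⌊c * (k:ℝ)⌋₊ := by
    have hfl1 : ∀ᶠ k : ℕ in atTop, (1:ℝ) ≤ c * k :=
      ((tendsto_natCast_atTop_atTop (R := ℝ)).const_mul_atTop hc0).eventually_ge_atTop 1
    filter_upwards [(tendsto_order.1 (hratio c hc0)).1 _ hclam, hfl1, eventually_ge_atTop 1]
      with k hk hk1 hk2
    have hrk := hrpos k hk2
    rw [lt_div_iff₀ hrk] at hk
    exact ⟨by linarith, Nat.le_floor (by exact_mod_cast hk1)⟩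
  filter_upwards [(rinv_atTop hrtop).eventually hevk] with n hn
  obtain ⟨h1, h2⟩ := hn
  have hspec := (rinv_mem hrtop n).2
  have hkey : ((⌊lam * (n:ℝ)⌋₊ : ℕ):ℝ) ≤ r ⌊c * ((rinv r n : ℕ):ℝ)⌋₊ := by
    calc ((⌊lam * (n:ℝ)⌋₊ : ℕ):ℝ) ≤ lam * n := Nat.floor_le (by positivity)
    _ ≤ lam * r (rinv r n) := mul_le_mul_of_nonneg_left hspec hlam.le
    _ ≤ r ⌊c * ((rinv r n : ℕ):ℝ)⌋₊ := le_of_lt h1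
  have hle := rinv_le h2 hkey
  calc (rinv r ⌊lam * (n:ℝ)⌋₊ : ℝ) ≤ (⌊c * ((rinv r n : ℕ):ℝ)⌋₊ : ℝ) := by
        exact_mod_cast hle
  _ ≤ c * (rinv r n : ℝ) := Nat.floor_le (by positivity)

lemma partLB {r : ℕ → ℝ} {ρ : ℝ} (hρ : 0 < ρ) (hrpos : ∀ n, 1 ≤ n → 0 < r n)
    (hmono' : ∀ A : ℝ, 1 < A → ∃ N : ℕ, 1 ≤ N ∧ ∀ i n : ℕ, N ≤ i → i ≤ n → r i ≤ A * r n)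
    (hratio : ∀ lam : ℝ, 0 < lam →
      Tendsto (fun n : ℕ => r ⌊lam * (n:ℝ)⌋₊ / r n) atTop (nhds (lam ^ ρ)))
    (hrtop : Tendsto r atTop atTop)
    (lam c' : ℝ) (hlam : 0 < lam) (hc'0 : 0 < c') (hc : c' ^ ρ < lam) :
    ∀ᶠ n : ℕ in atTop, c' * (rinv r n : ℝ) < (rinv r ⌊lam * (n:ℝ)⌋₊ : ℝ) := by
  set θ := (c' ^ ρ + lam)/2 with hθ
  have hcρ0 : 0 < c' ^ ρ := Real.rpow_pos_of_pos hc'0 _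
  have hθ0 : 0 < θ := by rw [hθ]; linarith
  have hθ1 : c' ^ ρ < θ := by rw [hθ]; linarith
  have hθ2 : θ < lam := by rw [hθ]; linarith
  set γ := (lam - θ)/(2*θ) with hγ
  have hγ0 : 0 < γ := by rw [hγ]; exact div_pos (by linarith) (by linarith)
  have hθγ : θ * (1+γ) < lam := by
    have : θ * γ = (lam - θ)/2 := by rw [hγ]; field_simp
    nlinarith
  have hsm := smallmax hrpos hmono' hratio hrtop c' θ hc'0 hθ1
  have hA := partA hρ hrpos hratio hrtop
  have hevA : ∀ᶠ n : ℕ in atTop, r (rinv r n) < (1+γ) * n := by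
    filter_upwards [(tendsto_order.1 hA).2 _ (by linarith : (1:ℝ) < 1 + γ),
      eventually_ge_atTop 1] with n hn hn1
    have hn0 : (0:ℝ) < n := by exact_mod_cast hn1
    rw [div_lt_iff₀ hn0] at hn
    linarith
  have hev1 : ∀ᶠ n : ℕ in atTop, 1 ≤ (lam - θ*(1+γ)) * n := by
    have hpos : 0 < lam - θ*(1+γ) := by linarith
    exact ((tendsto_natCast_atTop_atTop (R := ℝ)).const_mul_atTop hpos).eventually_ge_atTop 1
  filter_upwards [(rinv_atTop hrtop).eventually hsm, hevA, hev1, eventually_ge_atTop 1]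
    with n hn hA' h1n hn1
  by_contra hcon
  push_neg at hcon
  have hm'mem := rinv_mem hrtop ⌊lam * (n:ℝ)⌋₊
  have h4 : r (rinv r ⌊lam * (n:ℝ)⌋₊) ≤ θ * r (rinv r n) := hn _ hm'mem.1 hcon
  have h6 : lam * n - 1 < ((⌊lam * (n:ℝ)⌋₊ : ℕ):ℝ) := Nat.sub_one_lt_floor _
  have h7 : θ * r (rinv r n) < θ * ((1+γ) * n) := mul_lt_mul_of_pos_left hA' hθ0
  have h8 : θ * ((1+γ)*n) = θ*(1+γ)*(n:ℝ) := by ring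
  have h9 : θ*(1+γ)*(n:ℝ) ≤ lam * n - 1 := by nlinarith [h1n]
  linarith [hm'mem.2]

lemma partC {r : ℕ → ℝ} {ρ : ℝ} (hρ : 0 < ρ) (hrpos : ∀ n, 1 ≤ n → 0 < r n)
    (hmono' : ∀ A : ℝ, 1 < A → ∃ N : ℕ, 1 ≤ N ∧ ∀ i n : ℕ, N ≤ i → i ≤ n → r i ≤ A * r n)
    (hratio : ∀ lam : ℝ, 0 < lam →
      Tendsto (fun n : ℕ => r ⌊lam * (n:ℝ)⌋₊ / r n) atTop (nhds (lam ^ ρ)))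
    (hrtop : Tendsto r atTop atTop)
    (lam : ℝ) (hlam : 0 < lam) :
    Tendsto (fun n : ℕ => (rinv r ⌊lam * (n:ℝ)⌋₊ : ℝ) / (rinv r n : ℝ)) atTop
      (nhds (lam ^ (1/ρ))) := by
  rw [Metric.tendsto_atTop]
  intro ε hε
  rw [← eventually_atTop]
  set L := lam ^ (1/ρ) with hL
  have hL0 : 0 < L := Real.rpow_pos_of_pos hlam _
  set δ := min (ε/(2*(L+1))) (1/2) with hδ
  have hδ0 : 0 < δ := lt_min (by positivity) (by norm_num)
  have hδhalf : δ ≤ 1/2 := min_le_right _ _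
  have hδε : L * δ < ε := by
    have h1 : δ ≤ ε/(2*(L+1)) := min_le_left _ _
    have h2 : L * (ε/(2*(L+1))) < ε := by
      rw [mul_div_assoc', div_lt_iff₀ (by positivity : (0:ℝ) < 2*(L+1))]
      nlinarith
    nlinarith
  set c' := L * (1-δ) with hc'
  have hc'0 : 0 < c' := by rw [hc']; nlinarith
  have hc'ρ : c' ^ ρ = lam * (1-δ) ^ ρ := rpow_aux lam (1-δ) hlam hρ (by linarith)
  have hc'lt : c' ^ ρ < lam := by
    rw [hc'ρ]
    have h3 : (1-δ) ^ ρ < 1 := Real.rpow_lt_one (by linarith) (by linarith) hρ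
    nlinarith
  have hUB := partUB hρ hrpos hratio hrtop lam δ hlam hδ0
  have hLB := partLB hρ hrpos hmono' hratio hrtop lam c' hlam hc'0 hc'lt
  filter_upwards [hUB, hLB, (rinv_atTop hrtop).eventually_ge_atTop 1] with n h1 h2 h3
  have hm0 : (0:ℝ) < (rinv r n : ℝ) := by exact_mod_cast h3
  rw [Real.dist_eq, abs_lt]
  constructor
  · have h4 : c' < (rinv r ⌊lam * (n:ℝ)⌋₊ : ℝ)/(rinv r n : ℝ) := (lt_div_iff₀ hm0).2 h2
    have h5 : L - ε < c' := by rw [hc']; nlinarith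
    linarith
  · have h6 : (rinv r ⌊lam * (n:ℝ)⌋₊ : ℝ)/(rinv r n : ℝ) ≤ L * (1+δ) :=
      (div_le_iff₀ hm0).2 h1
    nlinarith

end RVInverseAux

theorem rv_inverse (r : ℕ → ℝ) (ρ : ℝ) (hr : RVSeq r ρ) (hρ : 0 < ρ) :
    RVSeq (fun n => (rinv r n : ℝ)) (1 / ρ) ∧
      Filter.Tendsto (fun n => (rinv r ⌊r n⌋₊ : ℝ) / (n : ℝ))
        Filter.atTop (nhds 1) ∧
      Filter.Tendsto (fun n => r (rinv r n) / (n : ℝ))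
        Filter.atTop (nhds 1) := by
  classical
  obtain ⟨hrpos, l, hl1, hl2⟩ := hr
  have hlpos : ∀ n, 1 ≤ n → 0 < l n := by
    intro n hn
    have h := hrpos n hn
    rw [hl1 n hn] at h
    have hn0 : (0:ℝ) < (n:ℝ)^ρ := Real.rpow_pos_of_pos (by exact_mod_cast hn) ρ
    nlinarith
  have hratio : ∀ lam : ℝ, 0 < lam →
      Filter.Tendsto (fun n : ℕ => r ⌊lam * (n:ℝ)⌋₊ / r n) Filter.atTop (nhds (lam ^ ρ)) :=
    fun lam hlam => RVInverseAux.rv_ratio hl1 hl2 lam hlam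
  have hmono' : ∀ A : ℝ, 1 < A →
      ∃ N : ℕ, 1 ≤ N ∧ ∀ i n : ℕ, N ≤ i → i ≤ n → r i ≤ A * r n :=
    fun A hA => RVInverseAux.almost_mono hρ hrpos hl1 hlpos hl2 A hA
  have hrtop : Filter.Tendsto r Filter.atTop Filter.atTop :=
    RVInverseAux.r_atTop hρ hrpos hl1 hlpos hl2 hratio
  refine ⟨?_, RVInverseAux.partB hρ hrpos hmono' hratio hrtop,
    RVInverseAux.partA hρ hrpos hratio hrtop⟩
  constructor
  · intro n hn
    have h1 := (RVInverseAux.rinv_mem hrtop n).1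
    show (0:ℝ) < (rinv r n : ℝ)
    exact_mod_cast h1
  · refine ⟨fun n => (rinv r n : ℝ) / (n:ℝ)^(1/ρ), ?_, ?_⟩
    · intro n hn
      have hn0 : (0:ℝ) < n := by exact_mod_cast hn
      have hne : ((n:ℝ))^(1/ρ) ≠ 0 := (Real.rpow_pos_of_pos hn0 _).ne'
      field_simp
    · intro lam hlam
      have hC := RVInverseAux.partC hρ hrpos hmono' hratio hrtop lam hlam
      have hL0 : (0:ℝ) < lam^(1/ρ) := Real.rpow_pos_of_pos hlam _
      have hsecond : Filter.Tendsto
          (fun n : ℕ => (((⌊lam*(n:ℝ)⌋₊:ℝ)/(n:ℝ))^(1/ρ))⁻¹) Filter.atTop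
          (nhds ((lam^(1/ρ))⁻¹)) := by
        have h1 : Filter.Tendsto (fun n : ℕ => ((⌊lam*(n:ℝ)⌋₊:ℝ)/(n:ℝ))^(1/ρ))
            Filter.atTop (nhds (lam^(1/ρ))) :=
          ((Real.continuousAt_rpow_const lam (1/ρ) (Or.inl hlam.ne')).tendsto).comp
            (RVInverseAux.floor_div_tendsto lam hlam)
        exact h1.inv₀ hL0.ne'
      have hmul := hC.mul hsecond
      rw [mul_inv_cancel₀ hL0.ne'] at hmul
      apply hmul.congr'
      have hev : ∀ᶠ n : ℕ in Filter.atTop, (1:ℝ) ≤ lam * n := by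
        have := (tendsto_natCast_atTop_atTop (R := ℝ)).const_mul_atTop hlam
        exact this.eventually_ge_atTop 1
      filter_upwards [hev, Filter.eventually_ge_atTop 1] with n h1 hn1
      have hfl1 : 1 ≤ ⌊lam * (n:ℝ)⌋₊ := Nat.le_floor (by exact_mod_cast h1)
      have hn0 : (0:ℝ) < n := by exact_mod_cast hn1
      have hf0 : (0:ℝ) < (⌊lam*(n:ℝ)⌋₊:ℝ) := by exact_mod_cast hfl1
      have hrinvn : (0:ℝ) < (rinv r n : ℝ) := by
        exact_mod_cast (RVInverseAux.rinv_mem hrtop n).1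
      have hne1 : ((⌊lam*(n:ℝ)⌋₊:ℝ))^(1/ρ) ≠ 0 := (Real.rpow_pos_of_pos hf0 _).ne'
      have hne2 : ((n:ℝ))^(1/ρ) ≠ 0 := (Real.rpow_pos_of_pos hn0 _).ne'
      show (rinv r ⌊lam*(n:ℝ)⌋₊ : ℝ) / (rinv r n : ℝ) * (((⌊lam*(n:ℝ)⌋₊:ℝ)/(n:ℝ))^(1/ρ))⁻¹
          = (rinv r ⌊lam*(n:ℝ)⌋₊ : ℝ) / ((⌊lam*(n:ℝ)⌋₊:ℝ))^(1/ρ)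
            / ((rinv r n : ℝ) / ((n:ℝ))^(1/ρ))
      rw [Real.div_rpow hf0.le hn0.le, inv_div]
      field_simp
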